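/- If Y = aX + b with a > 0 and b ≥ 0, and X is nonnegative absolutely continuous with bounded support, then E_f(Y) = a·E_f(X), i.e., the failure extropy scales by a and is independent of the shift b. -/

import Mathlib

open MeasureTheory

/-- If `Y = aX + b` with `a > 0`, `b ≥ 0`, and `X` is nonnegative with
bounded support `[0,u]` and cdf `F`, then the failure extropy of `Y` (with cdf
`G y = F((y-b)/a)` on support `[b, a·u + b]`) equals `a` times that of `X`. -/
theorem failure_extropy_affine
    {Ω : Type*} [MeasurableSpace Ω] (μ : Measure Ω) [IsProbabilityMeasure μ]
    (X : Ω → ℝ) (hX : Measurable X) (u : ℝ) (hu : 0 < u)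
    (hsupp : ∀ ω, X ω ∈ Set.Icc 0 u)
    (a b : ℝ) (ha : 0 < a) (hb : 0 ≤ b)
    (F G : ℝ → ℝ)
    (hF : ∀ x, F x = (μ {ω | X ω ≤ x}).toReal)
    (hG : ∀ y, G y = (μ {ω | a * X ω + b ≤ y}).toReal) :
    -(1/2) * ∫ y in b..(a * u + b), (G y) ^ 2
      = a * (-(1/2) * ∫ x in (0:ℝ)..u, (F x) ^ 2) := by
  have hGF : ∀ y, G y = F (y / a - b / a) := by
    intro y
    rw [hG, hF]
    have hset : {ω | a * X ω + b ≤ y} = {ω | X ω ≤ y / a - b / a} := by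
      ext ω
      simp only [Set.mem_setOf_eq]
      rw [← sub_div, le_div_iff₀ ha]
      constructor <;> intro h <;> linarith
    rw [hset]
  have key : (∫ y in b..(a * u + b), (G y) ^ 2)
      = a • ∫ x in (0:ℝ)..u, (F x) ^ 2 := by
    have := intervalIntegral.integral_comp_div_sub (a := b) (b := a * u + b)
      (f := fun x => (F x) ^ 2) (c := a) (ne_of_gt ha) (b / a)
    simp only [hGF]
    rw [this]
    have h1 : b / a - b / a = 0 := by ring
    have h2 : (a * u + b) / a - b / a = u := by field_simp; ring
    rw [h1, h2]
  rw [key]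
  simp only [smul_eq_mul]
  ring
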